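/- Let a, b be positive integers and q = gcd(a, b). For every natural number n, the equation a·x + b·y = ab/q + q + n·q has a solution in positive integers x, y. -/

import Mathlib

lemma key_lemma (a' b' m : ℕ) (ha : 0 < a') (hb : 0 < b') (hm : 0 < m)
    (h : Nat.Coprime a' b') :
    ∃ x y : ℕ, 1 ≤ x ∧ 1 ≤ y ∧ a' * x + b' * y = a' * b' + m := by
  -- first find y with 1 ≤ y ≤ a' and a' * b' + m ≡ b' * y [MOD a']
  obtain ⟨y, hy1, hy2, hmod⟩ :
      ∃ y : ℕ, 1 ≤ y ∧ y ≤ a' ∧ (a' * b' + m) ≡ b' * y [MOD a'] := by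
    rcases eq_or_lt_of_le (show 1 ≤ a' from ha) with h1 | h1
    · refine ⟨1, le_refl 1, by omega, ?_⟩
      rw [← h1]
      exact Nat.modEq_one
    · obtain ⟨c, -, hc⟩ := Nat.exists_mul_mod_eq_one_of_coprime h.symm h1
      set r := (m * c) % a' with hr
      refine ⟨if r = 0 then a' else r, ?_, ?_, ?_⟩
      · split <;> omega
      · have : r < a' := Nat.mod_lt _ (by omega)
        split <;> omega
      · have h2 : b' * (if r = 0 then a' else r) ≡ b' * r [MOD a'] := by
          split
          · next hz =>
            rw [hz, mul_zero]
            exact Nat.modEq_zero_iff_dvd.mpr ⟨b', mul_comm _ _⟩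
          · rfl
        have h3 : b' * r ≡ b' * (m * c) [MOD a'] :=
          (Nat.mod_modEq (m * c) a').mul_left b'
        have hbc : b' * c ≡ 1 [MOD a'] := by
          show b' * c % a' = 1 % a'
          rw [hc, Nat.mod_eq_of_lt h1]
        have h4 : b' * (m * c) ≡ m [MOD a'] := by
          calc b' * (m * c) = (b' * c) * m := by ring
            _ ≡ 1 * m [MOD a'] := hbc.mul_right m
            _ = m := one_mul m
        have h5 : a' * b' + m ≡ 0 + m [MOD a'] :=
          (Nat.modEq_zero_iff_dvd.mpr (dvd_mul_right a' b')).add_right m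
        have h5' : a' * b' + m ≡ m [MOD a'] := by simpa using h5
        exact h5'.trans ((h2.trans h3).trans h4).symm
  -- now define x
  have hby : b' * y ≤ a' * b' := by
    calc b' * y ≤ b' * a' := Nat.mul_le_mul_left b' hy2
      _ = a' * b' := mul_comm _ _
  have hle : b' * y ≤ a' * b' + m := by omega
  have hdvd : a' ∣ (a' * b' + m - b' * y) := (Nat.modEq_iff_dvd' hle).mp hmod.symm
  obtain ⟨x, hx⟩ := hdvd
  have hpos : 0 < a' * b' + m - b' * y := by omega
  have hxpos : 0 < x := by
    rcases Nat.eq_zero_or_pos x with h0 | h0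
    · rw [h0, mul_zero] at hx; omega
    · exact h0
  exact ⟨x, y, hxpos, hy1, by omega⟩

theorem positive_solutions (a b : ℕ) (ha : 1 ≤ a) (hb : 1 ≤ b) (n : ℕ) :
    ∃ x y : ℕ, 1 ≤ x ∧ 1 ≤ y ∧
      a * x + b * y = a * b / Nat.gcd a b + Nat.gcd a b + n * Nat.gcd a b := by
  set q := Nat.gcd a b with hq
  have hq0 : 0 < q := Nat.gcd_pos_of_pos_left b ha
  set a' := a / q with ha'
  set b' := b / q with hb'
  have hA : a = q * a' := (Nat.mul_div_cancel' (Nat.gcd_dvd_left a b)).symm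
  have hB : b = q * b' := (Nat.mul_div_cancel' (Nat.gcd_dvd_right a b)).symm
  have ha0 : 0 < a' := Nat.div_pos (Nat.le_of_dvd (by omega) (Nat.gcd_dvd_left a b)) hq0
  have hb0 : 0 < b' := Nat.div_pos (Nat.le_of_dvd (by omega) (Nat.gcd_dvd_right a b)) hq0
  have hcop : Nat.Coprime a' b' := Nat.coprime_div_gcd_div_gcd hq0
  obtain ⟨x, y, hx1, hy1, heq⟩ := key_lemma a' b' (n + 1) ha0 hb0 (by omega) hcop
  refine ⟨x, y, hx1, hy1, ?_⟩
  have hdiv : a * b / q = q * (a' * b') := by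
    rw [hA, hB, show q * a' * (q * b') = q * (q * (a' * b')) by ring]
    exact Nat.mul_div_cancel_left _ hq0
  rw [hdiv, hA, hB]
  calc q * a' * x + q * b' * y = q * (a' * x + b' * y) := by ring
    _ = q * (a' * b' + (n + 1)) := by rw [heq]
    _ = q * (a' * b') + q + n * q := by ring
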